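/- Let X be the number of fixed points of a uniformly random permutation π of {1, …, n}. Then for every t ≥ 0, P(|X - 1| ≥ t) ≤ 2 exp(-t² / (4 + 2t)). -/
import Mathlib


open Finset

lemma descFact_mono {m n : ℕ} (h : m ≤ n) : ∀ k, m.descFactorial k ≤ n.descFactorial k
  | 0 => le_refl 1
  | (k+1) => by
      rw [Nat.descFactorial_succ, Nat.descFactorial_succ]
      exact Nat.mul_le_mul (Nat.sub_le_sub_right h k) (descFact_mono h k)

lemma two_pow_le_fact : ∀ k : ℕ, 2 ^ (k - 1) ≤ k.factorial
  | 0 => by norm_num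
  | 1 => by norm_num
  | (k+2) => by
      have ih := two_pow_le_fact (k+1)
      simp only [Nat.add_sub_cancel] at *
      calc 2^(k+1) = 2 * 2^k := by ring
        _ ≤ (k+2) * (k+1).factorial := Nat.mul_le_mul (by omega) ih
        _ = (k+2).factorial := (Nat.factorial_succ _).symm

lemma count_emb (n k : ℕ) (π : Equiv.Perm (Fin n)) :
    (univ.filter (fun e : Fin k ↪ Fin n => ∀ i, π (e i) = e i)).card
      = ((univ.filter fun i : Fin n => π i = i).card).descFactorial k := by
  classical
  rw [← Fintype.card_subtype]
  have e1 : {e : Fin k ↪ Fin n // ∀ i, π (e i) = e i}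
      ≃ (Fin k ↪ {i : Fin n // π i = i}) :=
    { toFun := fun ⟨e, h⟩ => ⟨fun i => ⟨e i, h i⟩,
        fun a b hab => e.injective (congrArg Subtype.val hab)⟩
      invFun := fun f => ⟨f.trans (Function.Embedding.subtype _), fun i => (f i).2⟩
      left_inv := fun ⟨e, h⟩ => by ext i; rfl
      right_inv := fun f => by ext i; rfl }
  rw [Fintype.card_congr e1, Fintype.card_embedding_eq, Fintype.card_fin, Fintype.card_subtype]

lemma count_fixing (n k : ℕ) (e : Fin k ↪ Fin n) :
    (univ.filter (fun π : Equiv.Perm (Fin n) => ∀ i, π (e i) = e i)).card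
      = (n - k).factorial := by
  classical
  rw [← Fintype.card_subtype]
  have e1 : {π : Equiv.Perm (Fin n) // ∀ i, π (e i) = e i}
      ≃ {f : Equiv.Perm (Fin n) // ∀ a, ¬ (a ∉ Set.range e) → f a = a} :=
    Equiv.subtypeEquivRight (by
      intro f
      constructor
      · rintro h a ha
        rw [not_not] at ha
        obtain ⟨i, rfl⟩ := ha
        exact h i
      · intro h i
        exact h (e i) (by simp [Set.mem_range]))
  have e2 := (Equiv.Perm.subtypeEquivSubtypePerm (fun a : Fin n => a ∉ Set.range e))
  rw [Fintype.card_congr (e1.trans e2.symm), Fintype.card_perm, Fintype.card_subtype_compl]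
  congr 2
  · exact Fintype.card_fin n
  · simp only [Set.mem_range]
    rw [Fintype.card_subtype]
    have : (univ.filter fun a : Fin n => ∃ i, e i = a) = univ.image e := by
      ext a; simp [eq_comm]
    rw [this, Finset.card_image_of_injective _ e.injective, card_univ, Fintype.card_fin]

lemma main_count (n k : ℕ) :
    (univ.filter (fun π : Equiv.Perm (Fin n) =>
        k ≤ (univ.filter fun i : Fin n => π i = i).card)).card * k.factorial
      ≤ n.factorial := by
  classical
  by_cases hk : k ≤ n
  · have swap : ∑ π : Equiv.Perm (Fin n),
        ((univ.filter fun i : Fin n => π i = i).card).descFactorial k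
        = Fintype.card (Fin k ↪ Fin n) * (n - k).factorial := by
      have h1 : ∀ π : Equiv.Perm (Fin n),
          ((univ.filter fun i : Fin n => π i = i).card).descFactorial k
          = ∑ e : Fin k ↪ Fin n, (if ∀ i, π (e i) = e i then 1 else 0) := by
        intro π
        rw [← count_emb n k π, Finset.card_filter]
      simp_rw [h1]
      rw [Finset.sum_comm]
      have h2 : ∀ e : Fin k ↪ Fin n,
          ∑ π : Equiv.Perm (Fin n), (if ∀ i, π (e i) = e i then 1 else 0)
          = (n - k).factorial := by
        intro e
        rw [← Finset.card_filter, count_fixing n k e]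
      simp_rw [h2, Finset.sum_const, card_univ, smul_eq_mul]
    have lower : (univ.filter (fun π : Equiv.Perm (Fin n) =>
        k ≤ (univ.filter fun i : Fin n => π i = i).card)).card * k.factorial
        ≤ ∑ π : Equiv.Perm (Fin n),
          ((univ.filter fun i : Fin n => π i = i).card).descFactorial k := by
      calc _ = ∑ π ∈ univ.filter (fun π : Equiv.Perm (Fin n) =>
              k ≤ (univ.filter fun i : Fin n => π i = i).card), k.factorial := by
              rw [Finset.sum_const, smul_eq_mul]
        _ ≤ ∑ π ∈ univ.filter (fun π : Equiv.Perm (Fin n) =>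
              k ≤ (univ.filter fun i : Fin n => π i = i).card),
              ((univ.filter fun i : Fin n => π i = i).card).descFactorial k := by
              apply Finset.sum_le_sum
              intro π hπ
              rw [Finset.mem_filter] at hπ
              calc k.factorial = k.descFactorial k := (Nat.descFactorial_self k).symm
                _ ≤ _ := descFact_mono hπ.2 k
        _ ≤ _ := Finset.sum_le_sum_of_subset (Finset.filter_subset _ _)
    calc _ ≤ _ := lower
      _ = Fintype.card (Fin k ↪ Fin n) * (n - k).factorial := swap
      _ = n.descFactorial k * (n - k).factorial := by
            rw [Fintype.card_embedding_eq, Fintype.card_fin, Fintype.card_fin]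
      _ = n.factorial := by rw [mul_comm, Nat.factorial_mul_descFactorial hk]
  · have : (univ.filter (fun π : Equiv.Perm (Fin n) =>
        k ≤ (univ.filter fun i : Fin n => π i = i).card)) = ∅ := by
      apply Finset.filter_false_of_mem
      intro π _
      push_neg
      calc (univ.filter fun i : Fin n => π i = i).card
          ≤ (univ : Finset (Fin n)).card := Finset.card_filter_le _ _
        _ = n := by simp
        _ < k := by omega
    rw [this]
    simp [Nat.one_le_iff_ne_zero.mpr (Nat.factorial_ne_zero n)]

lemma exp_half_le_two : Real.exp (1/2) ≤ 2 := by
  have h1 := Real.exp_one_lt_d9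
  have h2 : Real.exp (1/2) * Real.exp (1/2) = Real.exp 1 := by
    rw [← Real.exp_add]; norm_num
  nlinarith [Real.exp_pos (1/2 : ℝ)]

/-- **Concentration of the number of fixed points of a random permutation.**
Let `X` be the number of fixed points of a uniformly random permutation `π` of `{1,…,n}`
(whose expectation is `1`). Then `P(|X - 1| ≥ t) ≤ 2 exp(-t²/(4 + 2t))` for all `t ≥ 0`.
The probability under the uniform measure on `S_n` is expressed as a normalized count. -/
theorem fixed_points_concentration
    (n : ℕ) (hn : 1 ≤ n)
    (X : Equiv.Perm (Fin n) → ℝ)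
    (hX : ∀ π, X π = ((Finset.univ.filter (fun i : Fin n => π i = i)).card : ℝ))
    (t : ℝ) (ht : 0 ≤ t) :
    ((Finset.univ.filter (fun π : Equiv.Perm (Fin n) => t ≤ |X π - 1|)).card : ℝ)
        / (Nat.factorial n)
      ≤ 2 * Real.exp (-t ^ 2 / (4 + 2 * t)) := by
  classical
  have hfpos : (0:ℝ) < (Nat.factorial n : ℝ) := by
    exact_mod_cast Nat.factorial_pos n
  have h4 : (0:ℝ) < 4 + 2 * t := by linarith
  by_cases ht2 : t ≤ 2
  · -- trivial bound: LHS ≤ 1 ≤ RHS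
    have lhs1 : ((Finset.univ.filter
        (fun π : Equiv.Perm (Fin n) => t ≤ |X π - 1|)).card : ℝ)
        / (Nat.factorial n) ≤ 1 := by
      rw [div_le_one hfpos]
      exact_mod_cast (Finset.card_filter_le _ _).trans
        (le_of_eq (by rw [card_univ, Fintype.card_perm, Fintype.card_fin]))
    refine lhs1.trans ?_
    have hlog : t ^ 2 / (4 + 2 * t) ≤ Real.log 2 := by
      rw [div_le_iff₀ h4]
      nlinarith [Real.log_two_gt_d9]
    have : Real.exp (-Real.log 2) ≤ Real.exp (-t ^ 2 / (4 + 2 * t)) := by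
      apply Real.exp_le_exp.mpr
      rw [neg_div]
      linarith
    rw [Real.exp_neg, Real.exp_log (by norm_num : (0:ℝ) < 2)] at this
    linarith
  · push_neg at ht2
    set k : ℕ := ⌈t⌉₊ + 1 with hkdef
    -- event ⊆ {π : k ≤ fixed points}
    have hsub : (Finset.univ.filter (fun π : Equiv.Perm (Fin n) => t ≤ |X π - 1|))
        ⊆ (univ.filter (fun π : Equiv.Perm (Fin n) =>
            k ≤ (univ.filter fun i : Fin n => π i = i).card)) := by
      intro π hπ
      simp only [Finset.mem_filter, Finset.mem_univ, true_and] at hπ ⊢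
      set m := (univ.filter fun i : Fin n => π i = i).card with hm
      rw [hX π, ← hm] at hπ
      have hmge : t + 1 ≤ (m : ℝ) := by
        rcases abs_cases ((m : ℝ) - 1) with ⟨h1, h2⟩ | ⟨h1, h2⟩
        · linarith
        · have : (0:ℝ) ≤ (m : ℝ) := Nat.cast_nonneg m
          linarith
      have hm1 : 1 ≤ m := by
        exact_mod_cast (by linarith : (1:ℝ) ≤ (m:ℝ))
      have hceil : ⌈t⌉₊ ≤ m - 1 := by
        apply Nat.ceil_le.mpr
        have : ((m - 1 : ℕ) : ℝ) = (m : ℝ) - 1 := by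
          push_cast [Nat.cast_sub hm1]; ring
        rw [this]
        linarith
      omega
    have hcard := Finset.card_le_card hsub
    have hmain := main_count n k
    have hkfpos : (0:ℝ) < (Nat.factorial k : ℝ) := by
      exact_mod_cast Nat.factorial_pos k
    have step1 : ((Finset.univ.filter
        (fun π : Equiv.Perm (Fin n) => t ≤ |X π - 1|)).card : ℝ)
        / (Nat.factorial n) ≤ 1 / (Nat.factorial k : ℝ) := by
      rw [div_le_div_iff₀ hfpos hkfpos, one_mul]
      calc ((Finset.univ.filter
          (fun π : Equiv.Perm (Fin n) => t ≤ |X π - 1|)).card : ℝ) * (Nat.factorial k : ℝ)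
          ≤ ((univ.filter (fun π : Equiv.Perm (Fin n) =>
              k ≤ (univ.filter fun i : Fin n => π i = i).card)).card : ℝ)
              * (Nat.factorial k : ℝ) := by
            apply mul_le_mul_of_nonneg_right _ (le_of_lt hkfpos)
            exact_mod_cast hcard
        _ ≤ (Nat.factorial n : ℝ) := by exact_mod_cast hmain
    refine step1.trans ?_
    -- now show 1/k! ≤ 2 exp(-t²/(4+2t))
    have hexp : Real.exp (t ^ 2 / (4 + 2 * t)) ≤ 2 * (Nat.factorial k : ℝ) := by
      have e1 : t ^ 2 / (4 + 2 * t) ≤ (⌈t⌉₊ : ℝ) * (1/2) := by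
        have htc : t ≤ (⌈t⌉₊ : ℝ) := Nat.le_ceil t
        rw [div_le_iff₀ h4]
        nlinarith
      calc Real.exp (t ^ 2 / (4 + 2 * t)) ≤ Real.exp ((⌈t⌉₊ : ℝ) * (1/2)) :=
            Real.exp_le_exp.mpr e1
        _ = Real.exp (1/2) ^ (⌈t⌉₊ : ℕ) := Real.exp_nat_mul _ _
        _ ≤ 2 ^ (⌈t⌉₊ : ℕ) := by
            apply pow_le_pow_left₀ (le_of_lt (Real.exp_pos _)) exp_half_le_two
        _ ≤ (Nat.factorial k : ℝ) := by
            have := two_pow_le_fact k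
            have hk1 : k - 1 = ⌈t⌉₊ := by omega
            rw [hk1] at this
            exact_mod_cast this
        _ ≤ 2 * (Nat.factorial k : ℝ) := by linarith
    have hu := Real.exp_pos (t ^ 2 / (4 + 2 * t))
    rw [neg_div, Real.exp_neg]
    have h2e : 2 * (Real.exp (t ^ 2 / (4 + 2 * t)))⁻¹
        = 2 / Real.exp (t ^ 2 / (4 + 2 * t)) := (div_eq_mul_inv _ _).symm
    rw [h2e, div_le_div_iff₀ hkfpos hu, one_mul]
    linarith
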